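/- The ring 𝒜 has no zero-divisors: if a, b ∈ 𝒜 and a∘b = 0, then a = 0 or b = 0. -/

import Mathlib

set_option linter.unusedSectionVars false


/- Context: `L` is an algebraically closed field of characteristic `p`, `q = p^υ`,
`x ∈ L` is transcendental over the prime field, `rt` is the unique `q`-th root map
(`rt a ^ q = a`), `[i] = x^{q^i} - x`, `V = L → L` with pointwise addition, and `𝒜`
is the subring of `End(V)` generated by `τ : u ↦ u^q`, the Carlitz derivative
`d : u ↦ (u(xt) - x·u(t))^{1/q}` and the scalar operators `μ_λ : u ↦ λ·u`. -/

/-- The scalar multiplication operator `μ_λ : u ↦ λ·u` on `V = L → L`. -/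
def muOp (L : Type*) [CommRing L] (lam : L) : AddMonoid.End (L → L) :=
{ toFun := fun u t => lam * u t
  map_zero' := by funext t; simp
  map_add' := by intro u v; funext t; simp [mul_add] }

/-- The Frobenius operator `τ : u ↦ u^q` (`q = p^υ`) on `V = L → L`. -/
def tauOp (p υ : ℕ) [Fact p.Prime] (L : Type*) [CommRing L] [CharP L p] :
    AddMonoid.End (L → L) :=
{ toFun := fun u t => u t ^ p ^ υ
  map_zero' := by
    funext t
    exact zero_pow (pow_ne_zero υ (Nat.Prime.ne_zero Fact.out))
  map_add' := by
    intro u v; funext t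
    exact add_pow_char_pow (u t) (v t) p υ }

/-- The Carlitz derivative `d : u ↦ (u(xt) - x·u(t))^{1/q}` on `V = L → L`,
where `rt` is the (unique) `q`-th root map on `L`. -/
def dOp (p υ : ℕ) [Fact p.Prime] (L : Type*) [Field L] [CharP L p] (x : L)
    (rt : L → L) (hrt : ∀ a : L, rt a ^ p ^ υ = a) : AddMonoid.End (L → L) :=
{ toFun := fun u t => rt (u (x * t) - x * u t)
  map_zero' := by
    have hinj : Function.Injective fun a : L => a ^ p ^ υ := by
      intro a b hab
      exact (iterateFrobenius L p υ).injective
        (by simpa [iterateFrobenius_def] using hab)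
    funext t
    apply hinj
    simp [hrt, zero_pow (pow_ne_zero υ (Nat.Prime.ne_zero Fact.out))]
  map_add' := by
    have hinj : Function.Injective fun a : L => a ^ p ^ υ := by
      intro a b hab
      exact (iterateFrobenius L p υ).injective
        (by simpa [iterateFrobenius_def] using hab)
    intro u v; funext t
    apply hinj
    simp only [Pi.add_apply]
    rw [hrt, add_pow_char_pow, hrt, hrt]
    ring }

/-- The ring `𝒜` of `F_q`-linear polynomial differential operators: the subring of
`End(V)` generated by `τ`, `d` and the scalar operators `μ_λ`, `λ ∈ L`. -/
def opRingA (p υ : ℕ) [Fact p.Prime] (L : Type*) [Field L] [CharP L p] (x : L)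
    (rt : L → L) (hrt : ∀ a : L, rt a ^ p ^ υ = a) :
    Subring (AddMonoid.End (L → L)) :=
  Subring.closure (Set.range (muOp L) ∪ {tauOp p υ L, dOp p υ L x rt hrt})

/-!  ### Auxiliary development

We show that every element of `𝒜` can be written as a "twisted polynomial"
`∑_{(j,s)} μ_{c (j,s)} ∘ φ^j ∘ (u ↦ (t ↦ u (x^s t)))`, where `φ = frobenius^υ`
is a ring automorphism of `L` (with `j` ranging over `ℤ`).  This representation is
faithful (by Dedekind's independence of characters and the transcendence of `x`),
and the product of two such operators corresponds to a twisted convolution of the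
coefficient finsupps, which is nonzero for nonzero factors by a leading-term
(lexicographically maximal) argument. -/

noncomputable section OpRingNZDAux

variable (p υ : ℕ) [Fact p.Prime] (L : Type*) [Field L] [IsAlgClosed L] [CharP L p]

/-- `frobenius^υ` (i.e. `a ↦ a^q`) as a ring automorphism of `L`. -/
def phqA : RingAut L := (frobeniusEquiv L p : RingAut L) ^ υ

lemma frobpow_apply (n : ℕ) (a : L) :
    ((frobeniusEquiv L p ^ n : RingAut L)) a = a ^ p ^ n := by
  induction n with
  | zero => rw [pow_zero, pow_zero, pow_one]; rfl
  | succ k ih =>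
    rw [pow_succ]
    show (frobeniusEquiv L p ^ k) ((frobeniusEquiv L p) a) = _
    rw [frobeniusEquiv_def, map_pow, ih, ← pow_mul, ← pow_succ]

lemma phqA_apply (a : L) : phqA p υ L a = a ^ p ^ υ := frobpow_apply p L υ a

lemma phqA_zpow_add (m n : ℤ) (a : L) :
    (phqA p υ L ^ (m + n)) a = (phqA p υ L ^ m) ((phqA p υ L ^ n) a) := by
  rw [zpow_add]; rfl

lemma phqA_zpow_nat (k : ℕ) (a : L) :
    (phqA p υ L ^ (k : ℤ)) a = a ^ p ^ (υ * k) := by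
  rw [zpow_natCast]
  show ((frobeniusEquiv L p ^ υ : RingAut L) ^ k) a = _
  rw [← pow_mul]
  exact frobpow_apply p L (υ * k) a

variable (x : L)

/-- The basic operator `u ↦ (t ↦ φ^j (u (x^s t)))`. -/
def EopA (js : ℤ × ℕ) : AddMonoid.End (L → L) :=
{ toFun := fun u t => (phqA p υ L ^ js.1) (u (x ^ js.2 * t))
  map_zero' := by funext t; simp
  map_add' := by intro u v; funext t; simp }

lemma muOp_zero : muOp L 0 = 0 :=
  DFunLike.ext _ _ fun u => funext fun t => by
    show (0 : L) * u t = 0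
    rw [zero_mul]

lemma muOp_add (a b : L) : muOp L (a + b) = muOp L a + muOp L b :=
  DFunLike.ext _ _ fun u => funext fun t => by
    show (a + b) * u t = a * u t + b * u t
    rw [add_mul]

/-- The single-term additive homomorphism `a ↦ μ_a ∘ E_{(j,s)}`. -/
def termHomA (js : ℤ × ℕ) : L →+ AddMonoid.End (L → L) :=
{ toFun := fun a => muOp L a * EopA p υ L x js
  map_zero' := by
    show muOp L 0 * EopA p υ L x js = 0
    rw [muOp_zero, zero_mul]
  map_add' := fun a b => by
    show muOp L (a + b) * EopA p υ L x js
        = muOp L a * EopA p υ L x js + muOp L b * EopA p υ L x js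
    rw [muOp_add, add_mul] }

/-- The representation map from coefficient finsupps to operators. -/
def TopA : ((ℤ × ℕ) →₀ L) →+ AddMonoid.End (L → L) :=
  Finsupp.liftAddHom (termHomA p υ L x)

lemma TopA_single (js : ℤ × ℕ) (a : L) :
    TopA p υ L x (Finsupp.single js a) = muOp L a * EopA p υ L x js :=
  Finsupp.liftAddHom_apply_single _ _ _

lemma TopA_eq_sum (c : (ℤ × ℕ) →₀ L) :
    TopA p υ L x c = ∑ q ∈ c.support, muOp L (c q) * EopA p υ L x q := by
  rw [TopA, Finsupp.liftAddHom_apply]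
  rfl

lemma TopA_apply (c : (ℤ × ℕ) →₀ L) (u : L → L) (t : L) :
    TopA p υ L x c u t
      = ∑ q ∈ c.support, c q * (phqA p υ L ^ q.1) (u (x ^ q.2 * t)) := by
  rw [TopA_eq_sum]
  have hs : (∑ q ∈ c.support, muOp L (c q) * EopA p υ L x q) u
      = ∑ q ∈ c.support, (muOp L (c q) * EopA p υ L x q) u :=
    map_sum (AddMonoidHom.eval u) _ _
  rw [hs, Finset.sum_apply]
  rfl

lemma term_mul_term (a b : L) (js ks : ℤ × ℕ) :
    (muOp L a * EopA p υ L x js) * (muOp L b * EopA p υ L x ks)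
      = muOp L (a * (phqA p υ L ^ js.1) b) * EopA p υ L x (js + ks) := by
  refine DFunLike.ext _ _ fun u => funext fun t => ?_
  show a * (phqA p υ L ^ js.1) (b * (phqA p υ L ^ ks.1) (u (x ^ ks.2 * (x ^ js.2 * t))))
      = (a * (phqA p υ L ^ js.1) b)
          * (phqA p υ L ^ (js + ks).1) (u (x ^ (js + ks).2 * t))
  have harg : x ^ ks.2 * (x ^ js.2 * t) = x ^ (js.2 + ks.2) * t := by
    rw [← mul_assoc, ← pow_add, add_comm ks.2 js.2]
  rw [harg, map_mul, Prod.fst_add, Prod.snd_add, phqA_zpow_add, mul_assoc]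

/-- Twisted convolution of coefficient finsupps, matching operator product. -/
def convFA (c d : (ℤ × ℕ) →₀ L) : (ℤ × ℕ) →₀ L :=
  c.sum fun js a => d.sum fun ks b => Finsupp.single (js + ks) (a * (phqA p υ L ^ js.1) b)

lemma TopA_mul (c d : (ℤ × ℕ) →₀ L) :
    TopA p υ L x c * TopA p υ L x d = TopA p υ L x (convFA p υ L c d) := by
  rw [TopA_eq_sum p υ L x c, TopA_eq_sum p υ L x d, Finset.sum_mul_sum]
  rw [convFA, map_finsuppSum, Finsupp.sum]
  refine Finset.sum_congr rfl fun js hjs => ?_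
  rw [map_finsuppSum, Finsupp.sum]
  refine Finset.sum_congr rfl fun ks hks => ?_
  rw [TopA_single, term_mul_term]

set_option maxHeartbeats 1000000 in
lemma exists_lexmax (c : (ℤ × ℕ) →₀ L) (hc : c ≠ 0) :
    ∃ M, M ∈ c.support ∧ (∀ q ∈ c.support, q.1 ≤ M.1)
      ∧ (∀ q ∈ c.support, q.1 = M.1 → q.2 ≤ M.2) := by
  classical
  have hne : c.support.Nonempty := Finsupp.support_nonempty_iff.mpr hc
  have hAne : (c.support.image Prod.fst).Nonempty := hne.image _
  set j0 := (c.support.image Prod.fst).max' hAne with hj0def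
  have hj0 : j0 ∈ c.support.image Prod.fst := Finset.max'_mem _ hAne
  obtain ⟨q0, hq0, hq0j⟩ := Finset.mem_image.mp hj0
  have hFne : (c.support.filter (fun q => q.1 = j0)).Nonempty :=
    ⟨q0, Finset.mem_filter.mpr ⟨hq0, hq0j⟩⟩
  have hBne : ((c.support.filter (fun q => q.1 = j0)).image Prod.snd).Nonempty := hFne.image _
  set s0 := ((c.support.filter (fun q => q.1 = j0)).image Prod.snd).max' hBne with hs0def
  obtain ⟨q1, hq1, hq1s⟩ := Finset.mem_image.mp
    (Finset.max'_mem ((c.support.filter (fun q => q.1 = j0)).image Prod.snd) hBne)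
  have hq1f := Finset.mem_filter.mp hq1
  refine ⟨(j0, s0), ?_, ?_, ?_⟩
  · have hq1e : q1 = (j0, s0) := Prod.ext_iff.mpr ⟨hq1f.2, hq1s⟩
    rw [← hq1e]; exact hq1f.1
  · intro q hq
    exact Finset.le_max' _ _ (Finset.mem_image_of_mem _ hq)
  · intro q hq hqj
    exact Finset.le_max' _ _ (Finset.mem_image_of_mem _ (Finset.mem_filter.mpr ⟨hq, hqj⟩))

lemma convFA_apply_max (c d : (ℤ × ℕ) →₀ L) {M N : ℤ × ℕ}
    (hM : M ∈ c.support) (hMa : ∀ q ∈ c.support, q.1 ≤ M.1)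
    (hMb : ∀ q ∈ c.support, q.1 = M.1 → q.2 ≤ M.2)
    (hN : N ∈ d.support) (hNa : ∀ q ∈ d.support, q.1 ≤ N.1)
    (hNb : ∀ q ∈ d.support, q.1 = N.1 → q.2 ≤ N.2) :
    convFA p υ L c d (M + N) = c M * (phqA p υ L ^ M.1) (d N) := by
  classical
  rw [convFA, Finsupp.sum_apply, Finsupp.sum]
  rw [Finset.sum_eq_single_of_mem M hM]
  · rw [Finsupp.sum_apply, Finsupp.sum, Finset.sum_eq_single_of_mem N hN]
    · rw [Finsupp.single_apply, if_pos rfl]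
    · intro ks hks hne
      rw [Finsupp.single_apply, if_neg]
      intro he
      apply hne
      have h1 : M.1 + ks.1 = M.1 + N.1 := by
        have := congrArg Prod.fst he
        simpa using this
      have h2 : M.2 + ks.2 = M.2 + N.2 := by
        have := congrArg Prod.snd he
        simpa using this
      refine Prod.ext_iff.mpr ⟨by omega, by omega⟩
  · intro js hjs hne
    rw [Finsupp.sum_apply, Finsupp.sum]
    refine Finset.sum_eq_zero fun ks hks => ?_
    rw [Finsupp.single_apply, if_neg]
    intro he
    apply hne
    have h1 : js.1 + ks.1 = M.1 + N.1 := by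
      have := congrArg Prod.fst he
      simpa using this
    have h2 : js.2 + ks.2 = M.2 + N.2 := by
      have := congrArg Prod.snd he
      simpa using this
    have hb1 := hMa _ hjs
    have hb2 := hNa _ hks
    have hj1 : js.1 = M.1 := by omega
    have hk1 : ks.1 = N.1 := by omega
    have hb3 := hMb _ hjs hj1
    have hb4 := hNb _ hks hk1
    exact Prod.ext_iff.mpr ⟨hj1, by omega⟩

lemma TopA_injective0 [Algebra (ZMod p) L] (hυ : 1 ≤ υ) (hx : Transcendental (ZMod p) x)
    (c : (ℤ × ℕ) →₀ L) (h : TopA p υ L x c = 0) : c = 0 := by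
  classical
  -- distinctness of the powers of Frobenius at `x`
  have main : ∀ {m n : ℤ}, m < n → (phqA p υ L ^ m) x ≠ (phqA p υ L ^ n) x := by
    intro m n hlt heq
    have e2 : (phqA p υ L ^ (-m)) ((phqA p υ L ^ m) x) = x := by
      rw [← phqA_zpow_add, neg_add_cancel, zpow_zero]; rfl
    have e1 : (phqA p υ L ^ (n - m)) x = x := by
      rw [sub_eq_add_neg, add_comm, phqA_zpow_add, ← heq, e2]
    set dd := (n - m).toNat with hdd
    have hcast : ((dd : ℤ)) = n - m := Int.toNat_of_nonneg (by omega)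
    have hddpos : 1 ≤ dd := by omega
    have h2 : x ^ p ^ (υ * dd) = x := by
      rw [← phqA_zpow_nat, hcast]; exact e1
    have hexp : 1 < p ^ (υ * dd) :=
      Nat.one_lt_pow (by positivity) (Fact.out : p.Prime).one_lt
    apply hx
    refine ⟨Polynomial.X ^ (p ^ (υ * dd)) - Polynomial.X, ?_, ?_⟩
    · intro h0
      have h1 : (Polynomial.X : Polynomial (ZMod p)) ^ (p ^ (υ * dd)) = Polynomial.X :=
        sub_eq_zero.mp h0
      have h3 := congrArg Polynomial.natDegree h1
      rw [Polynomial.natDegree_X_pow, Polynomial.natDegree_X] at h3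
      omega
    · simp only [map_sub, map_pow, Polynomial.aeval_X]
      rw [sub_eq_zero]
      exact h2
  have hdist : ∀ m n : ℤ, (phqA p υ L ^ m) x = (phqA p υ L ^ n) x → m = n := by
    intro m n hmn
    rcases lt_trichotomy m n with h' | h' | h'
    · exact absurd hmn (main h')
    · exact h'
    · exact absurd hmn.symm (main h')
  -- Dedekind independence of characters
  let χ : ℤ → (L →* L) := fun n => ((phqA p υ L ^ n : RingAut L) : L →* L)
  have hχ : ∀ (n : ℤ) (a : L), χ n a = (phqA p υ L ^ n) a := fun n a => rfl
  have hχinj : Function.Injective χ := by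
    intro m n hmn
    exact hdist m n (by rw [← hχ m x, hmn, hχ])
  have hli : LinearIndependent L fun n : ℤ => ⇑(χ n) :=
    (linearIndependent_monoidHom L L).comp χ hχinj
  -- for each `k`, group the vanishing evaluation by the character `φ^{j+k}`
  have hnul : ∀ (k : ℕ) (n : ℤ), n ∈ c.support.image (fun q => q.1 + (k : ℤ)) →
      ∑ q ∈ c.support.filter (fun q => q.1 + (k : ℤ) = n),
        c q * ((phqA p υ L ^ n) x) ^ q.2 = 0 := by
    intro k
    have hsum : ∀ t : L,
        ∑ q ∈ c.support,
          c q * ((phqA p υ L ^ (q.1 + (k : ℤ))) x) ^ q.2 * (χ (q.1 + (k : ℤ))) t = 0 := by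
      intro t
      have h0 : TopA p υ L x c (fun y => y ^ p ^ (υ * k)) t = 0 := by rw [h]; rfl
      rw [TopA_apply] at h0
      rw [← h0]
      refine Finset.sum_congr rfl fun q hq => ?_
      rw [hχ]
      have e1 : (x ^ q.2 * t) ^ p ^ (υ * k) = (phqA p υ L ^ (k : ℤ)) (x ^ q.2 * t) :=
        (phqA_zpow_nat p υ L k _).symm
      rw [e1, ← phqA_zpow_add, map_mul, map_pow]
      ring
    have heq : ∑ n ∈ c.support.image (fun q => q.1 + (k : ℤ)),
        (∑ q ∈ c.support.filter (fun q => q.1 + (k : ℤ) = n),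
          c q * ((phqA p υ L ^ n) x) ^ q.2) • ⇑(χ n) = 0 := by
      funext t
      rw [Finset.sum_apply]
      simp only [Pi.smul_apply, smul_eq_mul, Pi.zero_apply]
      have regroup := Finset.sum_fiberwise_of_maps_to
        (g := fun q : ℤ × ℕ => q.1 + (k : ℤ)) (t := c.support.image (fun q => q.1 + (k : ℤ)))
        (fun q hq => Finset.mem_image_of_mem _ hq)
        (f := fun q : ℤ × ℕ => c q * ((phqA p υ L ^ (q.1 + (k : ℤ))) x) ^ q.2
            * (χ (q.1 + (k : ℤ))) t)
      rw [← hsum t, ← regroup]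
      refine Finset.sum_congr rfl fun n hn => ?_
      rw [Finset.sum_mul]
      refine Finset.sum_congr rfl fun q hq => ?_
      have hqn : q.1 + (k : ℤ) = n := (Finset.mem_filter.mp hq).2
      rw [hqn]
    intro n hn
    exact linearIndependent_iff'.mp hli _ _ heq n hn
  -- coefficient extraction via polynomials with infinitely many roots
  have hcoeff : ∀ q ∈ c.support, c q = (0 : L) := by
    rintro ⟨j, s0⟩ hq
    have hroot : ∀ k : ℕ,
        (∑ r ∈ c.support.filter (fun r : ℤ × ℕ => r.1 = j),
          Polynomial.C (c r) * Polynomial.X ^ r.2).IsRoot ((phqA p υ L ^ (j + (k : ℤ))) x) := by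
      intro k
      have hmem : j + (k : ℤ) ∈ c.support.image (fun r => r.1 + (k : ℤ)) := by
        refine Finset.mem_image.mpr ⟨(j, s0), hq, rfl⟩
      have h1 := hnul k (j + (k : ℤ)) hmem
      have hfe : c.support.filter (fun r : ℤ × ℕ => r.1 + (k : ℤ) = j + (k : ℤ))
          = c.support.filter (fun r : ℤ × ℕ => r.1 = j) := by
        apply Finset.filter_congr
        intro r _
        constructor
        · intro hh; omega
        · intro hh; omega
      rw [hfe] at h1
      show Polynomial.eval _ _ = 0
      rw [Polynomial.eval_finset_sum]
      simp only [Polynomial.eval_mul, Polynomial.eval_pow, Polynomial.eval_C, Polynomial.eval_X]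
      exact h1
    have hP0 : (∑ r ∈ c.support.filter (fun r : ℤ × ℕ => r.1 = j),
        Polynomial.C (c r) * Polynomial.X ^ r.2) = 0 := by
      apply Polynomial.eq_zero_of_infinite_isRoot
      apply Set.infinite_of_injective_forall_mem
        (f := fun k : ℕ => (phqA p υ L ^ (j + (k : ℤ))) x)
      · intro k1 k2 h12
        have := hdist _ _ h12
        omega
      · intro k
        exact hroot k
    have hco := congrArg (fun P => Polynomial.coeff P s0) hP0
    simp only [Polynomial.coeff_zero] at hco
    rw [Polynomial.finset_sum_coeff] at hco
    have hmemF : ((j, s0) : ℤ × ℕ) ∈ c.support.filter (fun r : ℤ × ℕ => r.1 = j) :=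
      Finset.mem_filter.mpr ⟨hq, rfl⟩
    have hsingle : ∑ b ∈ c.support.filter (fun r : ℤ × ℕ => r.1 = j),
        (Polynomial.C (c b) * Polynomial.X ^ b.2).coeff s0
        = (Polynomial.C (c ((j, s0) : ℤ × ℕ)) * Polynomial.X ^ s0).coeff s0 := by
      refine Finset.sum_eq_single_of_mem _ hmemF ?_
      intro r hr hrne
      have hr' := Finset.mem_filter.mp hr
      rw [Polynomial.coeff_C_mul, Polynomial.coeff_X_pow, if_neg, mul_zero]
      intro he
      exact hrne (Prod.ext_iff.mpr ⟨hr'.2, he.symm⟩)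
    rw [hsingle] at hco
    simpa [Polynomial.coeff_C_mul, Polynomial.coeff_X_pow] using hco
  exact Finsupp.ext fun q => by
    by_cases hq : q ∈ c.support
    · exact hcoeff q hq
    · exact Finsupp.notMem_support_iff.mp hq

end OpRingNZDAux

/-- The ring `𝒜` has no zero-divisors. -/
theorem opRing_no_zero_divisors (p υ : ℕ) [Fact p.Prime] (hυ : 1 ≤ υ)
    (L : Type*) [Field L] [IsAlgClosed L] [CharP L p] [Algebra (ZMod p) L]
    (x : L) (hx : Transcendental (ZMod p) x)
    (rt : L → L) (hrt : ∀ a : L, rt a ^ p ^ υ = a)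
    (a b : AddMonoid.End (L → L)) (ha : a ∈ opRingA p υ L x rt hrt) (hb : b ∈ opRingA p υ L x rt hrt)
    (hab : a * b = 0) :
    a = 0 ∨ b = 0 := by
  classical
  -- `rt` is the inverse of `φ = phqA`
  have hrtinv : ∀ y : L, rt y = (phqA p υ L)⁻¹ y := by
    intro y
    have hinj : Function.Injective ⇑(phqA p υ L) := (phqA p υ L).injective
    apply hinj
    rw [phqA_apply, hrt]
    calc y = (1 : RingAut L) y := rfl
    _ = (phqA p υ L * (phqA p υ L)⁻¹) y := by rw [mul_inv_cancel]
    _ = phqA p υ L ((phqA p υ L)⁻¹ y) := rfl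
  -- every element of `𝒜` is in the image of `TopA`
  have hrange : ∀ y ∈ opRingA p υ L x rt hrt, ∃ c, y = TopA p υ L x c := by
    intro y hy
    refine Subring.closure_induction ?_ ?_ ?_ ?_ ?_ ?_ hy
    · rintro z (⟨lam, rfl⟩ | hz)
      · refine ⟨Finsupp.single ((0 : ℤ), (0 : ℕ)) lam, ?_⟩
        rw [TopA_single]
        refine DFunLike.ext _ _ fun u => funext fun t => ?_
        show lam * u t = lam * (phqA p υ L ^ (0 : ℤ)) (u (x ^ (0 : ℕ) * t))
        rw [zpow_zero, pow_zero, one_mul]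
        rfl
      · rcases hz with hz | hz
        · refine ⟨Finsupp.single ((1 : ℤ), (0 : ℕ)) 1, ?_⟩
          rw [hz, TopA_single]
          refine DFunLike.ext _ _ fun u => funext fun t => ?_
          show u t ^ p ^ υ = 1 * (phqA p υ L ^ (1 : ℤ)) (u (x ^ (0 : ℕ) * t))
          rw [zpow_one, pow_zero, one_mul, one_mul, phqA_apply]
        · refine ⟨Finsupp.single ((-1 : ℤ), (1 : ℕ)) 1
            + Finsupp.single ((-1 : ℤ), (0 : ℕ)) (-(rt x)), ?_⟩
          rw [Set.mem_singleton_iff.mp hz, map_add, TopA_single, TopA_single]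
          refine DFunLike.ext _ _ fun u => funext fun t => ?_
          show rt (u (x * t) - x * u t)
              = 1 * (phqA p υ L ^ (-1 : ℤ)) (u (x ^ (1 : ℕ) * t))
              + (-(rt x)) * (phqA p υ L ^ (-1 : ℤ)) (u (x ^ (0 : ℕ) * t))
          rw [zpow_neg_one, pow_one, pow_zero, one_mul, one_mul, hrtinv, hrtinv]
          rw [map_sub ((phqA p υ L)⁻¹), map_mul ((phqA p υ L)⁻¹)]
          ring
    · exact ⟨0, (map_zero _).symm⟩
    · refine ⟨Finsupp.single ((0 : ℤ), (0 : ℕ)) 1, ?_⟩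
      rw [TopA_single]
      refine DFunLike.ext _ _ fun u => funext fun t => ?_
      show u t = 1 * (phqA p υ L ^ (0 : ℤ)) (u (x ^ (0 : ℕ) * t))
      rw [zpow_zero, pow_zero, one_mul, one_mul]
      rfl
    · rintro y1 y2 _ _ ⟨c1, rfl⟩ ⟨c2, rfl⟩
      exact ⟨c1 + c2, (map_add _ _ _).symm⟩
    · rintro y1 _ ⟨c1, rfl⟩
      exact ⟨-c1, (map_neg _ _).symm⟩
    · rintro y1 y2 _ _ ⟨c1, rfl⟩ ⟨c2, rfl⟩
      exact ⟨convFA p υ L c1 c2, TopA_mul p υ L x c1 c2⟩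
  obtain ⟨ca, hca⟩ := hrange a ha
  obtain ⟨cb, hcb⟩ := hrange b hb
  by_cases hca0 : ca = 0
  · left; rw [hca, hca0, map_zero]
  by_cases hcb0 : cb = 0
  · right; rw [hcb, hcb0, map_zero]
  exfalso
  obtain ⟨M, hM, hMa, hMb⟩ := exists_lexmax L ca hca0
  obtain ⟨N, hN, hNa, hNb⟩ := exists_lexmax L cb hcb0
  have hconv0 : convFA p υ L ca cb = 0 := by
    apply TopA_injective0 p υ L x hυ hx
    rw [← TopA_mul, ← hca, ← hcb, hab]
  have hval := convFA_apply_max p υ L ca cb hM hMa hMb hN hNa hNb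
  rw [hconv0] at hval
  simp only [Finsupp.coe_zero, Pi.zero_apply] at hval
  have h1 : ca M ≠ 0 := Finsupp.mem_support_iff.mp hM
  have h2 : cb N ≠ 0 := Finsupp.mem_support_iff.mp hN
  have h3 : (phqA p υ L ^ M.1) (cb N) ≠ 0 := by
    intro h0
    exact h2 ((phqA p υ L ^ M.1).injective (h0.trans (map_zero _).symm))
  exact (mul_ne_zero h1 h3) hval.symm
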